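/- Let p > 1, α ∈ ℝ with α ≠ 0, and let g be a positive C² function on an open set Ω ⊆ ℝ^N such that g^α is p-harmonic, i.e. div(|∇(g^α)|^{p-2} ∇(g^α)) = 0 on Ω. Then g·Δ_p g = (p-1)(1-α)|∇g|^p on Ω, where Δ_p g := div(|∇g|^{p-2}∇g). -/

import Mathlib

open Real

/-- The Euclidean `p`-Laplacian `div(|∇g|^{p-2} ∇g)` at a point. -/
noncomputable def pLaplacian {N : ℕ} (p : ℝ) (g : EuclideanSpace ℝ (Fin N) → ℝ)
    (ξ : EuclideanSpace ℝ (Fin N)) : ℝ :=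
  ∑ i, fderiv ℝ (fun x => ‖gradient g x‖ ^ (p - 2) * gradient g x i) ξ
    (EuclideanSpace.single i 1)

lemma grad_rpow_aux {N : ℕ} (g : EuclideanSpace ℝ (Fin N) → ℝ) (α : ℝ)
    (x : EuclideanSpace ℝ (Fin N)) (hd : DifferentiableAt ℝ g x) (hx : g x ≠ 0) :
    gradient (fun y => g y ^ α) x = (α * g x ^ (α - 1)) • gradient g x := by
  have h1 : HasFDerivAt (fun y => g y ^ α) ((α * g x ^ (α - 1)) • fderiv ℝ g x) x :=
    hd.hasFDerivAt.rpow_const (Or.inl hx)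
  rw [gradient, gradient, h1.fderiv, map_smul]

lemma fderiv_apply_single_aux {N : ℕ} (g : EuclideanSpace ℝ (Fin N) → ℝ)
    (x : EuclideanSpace ℝ (Fin N)) (i : Fin N) :
    fderiv ℝ g x (EuclideanSpace.single i 1) = gradient g x i := by
  have : (inner ℝ (gradient g x) (EuclideanSpace.single i 1) : ℝ)
      = fderiv ℝ g x (EuclideanSpace.single i 1) := InnerProductSpace.toDual_symm_apply
  rw [← this, EuclideanSpace.inner_single_right]
  simp

theorem stmt10 (N : ℕ) (p α : ℝ) (hp : 1 < p) (hα : α ≠ 0)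
    (Ω : Set (EuclideanSpace ℝ (Fin N))) (hΩ : IsOpen Ω)
    (g : EuclideanSpace ℝ (Fin N) → ℝ) (hg : ContDiffOn ℝ 2 g Ω)
    (hgpos : ∀ ξ ∈ Ω, 0 < g ξ) (hgrad : ∀ ξ ∈ Ω, gradient g ξ ≠ 0)
    (hharm : ∀ ξ ∈ Ω, pLaplacian p (fun x => g x ^ α) ξ = 0) :
    ∀ ξ ∈ Ω, g ξ * pLaplacian p g ξ = (p - 1) * (1 - α) * ‖gradient g ξ‖ ^ p := by
  intro ξ hξ
  set β : ℝ := (α - 1) * (p - 1) with hβdef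
  set c : ℝ := |α| ^ (p - 2) * α with hcdef
  have hgξ : 0 < g ξ := hgpos ξ hξ
  have hvξ : gradient g ξ ≠ 0 := hgrad ξ hξ
  have hdiff : ∀ x ∈ Ω, DifferentiableAt ℝ g x := fun x hx =>
    (hg.contDiffAt (hΩ.mem_nhds hx)).differentiableAt (by norm_num)
  -- pointwise identity on Ω
  have hpt : ∀ x ∈ Ω, ∀ i : Fin N,
      ‖gradient (fun y => g y ^ α) x‖ ^ (p - 2) * gradient (fun y => g y ^ α) x i
        = c * (g x ^ β * (‖gradient g x‖ ^ (p - 2) * gradient g x i)) := by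
    intro x hx i
    have hgx : 0 < g x := hgpos x hx
    have hgx' : (0:ℝ) < g x ^ (α - 1) := rpow_pos_of_pos hgx _
    have hG := grad_rpow_aux g α x (hdiff x hx) (ne_of_gt hgx)
    have e1 : ‖gradient (fun y => g y ^ α) x‖ = |α| * g x ^ (α - 1) * ‖gradient g x‖ := by
      rw [hG, norm_smul]
      rw [Real.norm_eq_abs, abs_mul, abs_of_pos hgx']
    have e2 : gradient (fun y => g y ^ α) x i = α * (g x ^ (α - 1) * gradient g x i) := by
      rw [hG]; simp [mul_assoc]
    have e3 : (|α| * g x ^ (α - 1) * ‖gradient g x‖) ^ (p - 2)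
        = |α| ^ (p - 2) * g x ^ ((α - 1) * (p - 2)) * ‖gradient g x‖ ^ (p - 2) := by
      rw [Real.mul_rpow (by positivity) (norm_nonneg _),
        Real.mul_rpow (abs_nonneg _) hgx'.le, ← Real.rpow_mul hgx.le]
    have e4 : g x ^ ((α - 1) * (p - 2)) * g x ^ (α - 1) = g x ^ β := by
      rw [← Real.rpow_add hgx]; congr 1; rw [hβdef]; ring
    rw [e1, e2, e3, hcdef, ← e4]; ring
  -- contDiff of gradient at ξ
  have hg2 : ContDiffAt ℝ 2 g ξ := hg.contDiffAt (hΩ.mem_nhds hξ)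
  have hfd : ContDiffAt ℝ 1 (fderiv ℝ g) ξ := hg2.fderiv_right (by norm_num)
  have hgr : ContDiffAt ℝ 1 (gradient g) ξ :=
    ((InnerProductSpace.toDual ℝ (EuclideanSpace ℝ (Fin N))).symm.contDiff).comp_contDiffAt ξ hfd
  have hGdiff : ∀ i : Fin N,
      DifferentiableAt ℝ (fun x => ‖gradient g x‖ ^ (p - 2) * gradient g x i) ξ := by
    intro i
    have hnorm : DifferentiableAt ℝ (fun x => ‖gradient g x‖) ξ :=
      (hgr.norm ℝ hvξ).differentiableAt (by norm_num)
    have h1 : DifferentiableAt ℝ (fun x => ‖gradient g x‖ ^ (p - 2)) ξ :=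
      hnorm.rpow_const (Or.inl (norm_ne_zero_iff.mpr hvξ))
    have h2 : DifferentiableAt ℝ (fun x => gradient g x i) ξ := by
      have := (EuclideanSpace.proj (𝕜 := ℝ) i).differentiableAt.comp ξ (hgr.differentiableAt (by norm_num))
      exact this
    exact h1.mul h2
  have hβd : HasFDerivAt (fun x => g x ^ β) ((β * g ξ ^ (β - 1)) • fderiv ℝ g ξ) ξ :=
    (hdiff ξ hξ).hasFDerivAt.rpow_const (Or.inl (ne_of_gt hgξ))
  -- fderiv of each summand
  have key : ∀ i : Fin N,
      fderiv ℝ (fun x => ‖gradient (fun y => g y ^ α) x‖ ^ (p - 2)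
          * gradient (fun y => g y ^ α) x i) ξ (EuclideanSpace.single i 1)
        = c * (g ξ ^ β * fderiv ℝ (fun x => ‖gradient g x‖ ^ (p - 2) * gradient g x i) ξ
              (EuclideanSpace.single i 1)
            + (‖gradient g ξ‖ ^ (p - 2) * gradient g ξ i)
              * (β * g ξ ^ (β - 1) * gradient g ξ i)) := by
    intro i
    have heq : (fun x => ‖gradient (fun y => g y ^ α) x‖ ^ (p - 2)
        * gradient (fun y => g y ^ α) x i)
        =ᶠ[nhds ξ] fun x => c * (g x ^ β * (‖gradient g x‖ ^ (p - 2) * gradient g x i)) := by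
      filter_upwards [hΩ.mem_nhds hξ] with x hx using hpt x hx i
    rw [heq.fderiv_eq]
    rw [fderiv_const_mul (a := fun x => g x ^ β * (‖gradient g x‖ ^ (p - 2) * gradient g x i)) ((hβd.differentiableAt).mul (hGdiff i))]
    rw [show (fun x => g x ^ β * (‖gradient g x‖ ^ (p - 2) * gradient g x i)) = (fun x => g x ^ β) * (fun x => ‖gradient g x‖ ^ (p - 2) * gradient g x i) from rfl]
    rw [fderiv_mul hβd.differentiableAt (hGdiff i)]
    simp only [ContinuousLinearMap.smul_apply, ContinuousLinearMap.add_apply,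
      ContinuousLinearMap.coe_smul', Pi.smul_apply, smul_eq_mul]
    rw [hβd.fderiv]
    simp only [ContinuousLinearMap.smul_apply, smul_eq_mul]
    rw [show fderiv ℝ g ξ (EuclideanSpace.single i 1) = gradient g ξ i from
      fderiv_apply_single_aux g ξ i]
  -- sum identity
  have hvsq : ∑ i, gradient g ξ i * gradient g ξ i = ‖gradient g ξ‖ ^ (2:ℕ) := by
    rw [← real_inner_self_eq_norm_sq]
    rw [PiLp.inner_apply]
    rfl
  have hnormpos : (0:ℝ) < ‖gradient g ξ‖ := norm_pos_iff.mpr hvξ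
  have hsum : pLaplacian p (fun x => g x ^ α) ξ
      = c * (g ξ ^ β * pLaplacian p g ξ + β * g ξ ^ (β - 1) * ‖gradient g ξ‖ ^ p) := by
    unfold pLaplacian
    rw [Finset.sum_congr rfl (fun i _ => key i)]
    rw [← Finset.mul_sum, Finset.sum_add_distrib, ← Finset.mul_sum]
    congr 1
    congr 1
    have : ∑ i, ‖gradient g ξ‖ ^ (p - 2) * gradient g ξ i * (β * g ξ ^ (β - 1) * gradient g ξ i)
        = β * g ξ ^ (β - 1) * (‖gradient g ξ‖ ^ (p - 2)
          * ∑ i, gradient g ξ i * gradient g ξ i) := by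
      rw [Finset.mul_sum, Finset.mul_sum]; congr 1; ext i; ring
    rw [this, hvsq]
    have : ‖gradient g ξ‖ ^ (p - 2) * ‖gradient g ξ‖ ^ (2:ℕ) = ‖gradient g ξ‖ ^ p := by
      rw [← Real.rpow_natCast ‖gradient g ξ‖ 2, ← Real.rpow_add hnormpos]
      norm_num
    rw [this]
  have h0 := hharm ξ hξ
  rw [hsum] at h0
  have hc : c ≠ 0 := by
    have : (0:ℝ) < |α| ^ (p - 2) := rpow_pos_of_pos (abs_pos.mpr hα) _
    exact mul_ne_zero (ne_of_gt this) hα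
  have h1 : g ξ ^ β * pLaplacian p g ξ + β * g ξ ^ (β - 1) * ‖gradient g ξ‖ ^ p = 0 := by
    rcases mul_eq_zero.mp h0 with h | h
    · exact absurd h hc
    · exact h
  have hsplit : g ξ ^ β = g ξ ^ (β - 1) * g ξ := by
    calc g ξ ^ β = g ξ ^ (β - 1 + 1) := by norm_num
    _ = g ξ ^ (β - 1) * g ξ := by rw [Real.rpow_add hgξ, Real.rpow_one]
  rw [hsplit] at h1
  have hgβ : (0:ℝ) < g ξ ^ (β - 1) := rpow_pos_of_pos hgξ _
  have h2 : g ξ ^ (β - 1) * (g ξ * pLaplacian p g ξ + β * ‖gradient g ξ‖ ^ p) = 0 := by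
    rw [mul_add]; rw [← h1]; ring
  have h3 : g ξ * pLaplacian p g ξ + β * ‖gradient g ξ‖ ^ p = 0 := by
    rcases mul_eq_zero.mp h2 with h | h
    · exact absurd h (ne_of_gt hgβ)
    · exact h
  have : g ξ * pLaplacian p g ξ = -β * ‖gradient g ξ‖ ^ p := by linarith
  rw [this, hβdef]; ring
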